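/- arXiv:2308.04207 — 3 statements merged into one kernel-verified Lean document; each statement's English description precedes it below -/
import Mathlib

section
/- Let L, N, P be positive integers, s ∈ ℝ^N, D ∈ ℝ^{P×N}, B₁, B₂ ∈ ℝ^{L×N}, and C ∈ ℝ^{L×P}. Then the symmetric matrix diag(s)² + DᵀD + I_N is positive definite (in particular invertible), and X₀ = (B₁ diag(s) + C D + B₂)(diag(s)² + DᵀD + I_N)⁻¹ is the unique global minimizer over X ∈ ℝ^{L×N} of f(X) = (1/2)‖X diag(s) − B₁‖_F² + (1/2)‖X Dᵀ − C‖_F² + (1/2)‖X − B₂‖_F². (This is the closed-form solution of the X-subproblem of the TV-regularized model, with D playing the role of the discrete gradient operator ∇ acting on the rows of X.) -/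
open Matrix

noncomputable def frobSq {m n : ℕ} (Z : Matrix (Fin m) (Fin n) ℝ) : ℝ :=
  ∑ i, ∑ j, (Z i j) ^ 2

lemma frobSq_eq_trace {m n : ℕ} (Z : Matrix (Fin m) (Fin n) ℝ) :
    frobSq Z = trace (Z * Zᵀ) := by
  simp [frobSq, trace, Matrix.mul_apply, Matrix.diag, sq]

lemma frobSq_nonneg {m n : ℕ} (Z : Matrix (Fin m) (Fin n) ℝ) : 0 ≤ frobSq Z := by
  unfold frobSq
  positivity

lemma frobSq_pos {m n : ℕ} {Z : Matrix (Fin m) (Fin n) ℝ} (h : Z ≠ 0) : 0 < frobSq Z := by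
  obtain ⟨i, j, hij⟩ : ∃ i j, Z i j ≠ 0 := by
    by_contra hc
    push_neg at hc
    exact h (by ext i j; simp [hc])
  have : (0:ℝ) < ∑ j', (Z i j') ^ 2 :=
    Finset.sum_pos' (fun _ _ => sq_nonneg _) ⟨j, Finset.mem_univ j, by positivity⟩
  exact lt_of_lt_of_le this <| Finset.single_le_sum
    (f := fun i' => ∑ j', (Z i' j') ^ 2) (fun _ _ => by positivity) (Finset.mem_univ i)

lemma frobSq_add {m n : ℕ} (U V : Matrix (Fin m) (Fin n) ℝ) :
    frobSq (U + V) = frobSq U + 2 * trace (U * Vᵀ) + frobSq V := by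
  have h : trace (V * Uᵀ) = trace (U * Vᵀ) := by
    rw [← Matrix.trace_transpose (V * Uᵀ), Matrix.transpose_mul, Matrix.transpose_transpose]
  simp only [frobSq_eq_trace, Matrix.transpose_add, Matrix.add_mul, Matrix.mul_add,
    Matrix.trace_add, h]
  ring

/-- Closed-form solution of the X-subproblem of the TV-regularized model:
`diag(s)² + DᵀD + I` is positive definite and
`X₀ = (B₁ diag(s) + C D + B₂)(diag(s)² + DᵀD + I)⁻¹` is the unique global minimizer of
`f(X) = ½‖X diag(s) − B₁‖_F² + ½‖X Dᵀ − C‖_F² + ½‖X − B₂‖_F²`. -/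
theorem stmt_1 (L N P : ℕ) (hL : 0 < L) (hN : 0 < N) (hP : 0 < P)
    (s : Fin N → ℝ) (D : Matrix (Fin P) (Fin N) ℝ)
    (B₁ B₂ : Matrix (Fin L) (Fin N) ℝ) (C : Matrix (Fin L) (Fin P) ℝ)
    (f : Matrix (Fin L) (Fin N) ℝ → ℝ)
    (hf : ∀ X, f X = (1/2) * frobSq (X * diagonal s - B₁)
        + (1/2) * frobSq (X * Dᵀ - C) + (1/2) * frobSq (X - B₂))
    (X₀ : Matrix (Fin L) (Fin N) ℝ)
    (hX₀ : X₀ = (B₁ * diagonal s + C * D + B₂) *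
        (diagonal s ^ 2 + Dᵀ * D + 1)⁻¹) :
    (diagonal s ^ 2 + Dᵀ * D + 1).PosDef ∧
    ∀ X : Matrix (Fin L) (Fin N) ℝ, X ≠ X₀ → f X₀ < f X := by
  set S := diagonal s with hS
  have hSsymmT : Sᵀ = S := by rw [hS]; exact Matrix.diagonal_transpose s
  have hSS : (S ^ 2).PosSemidef := by
    rw [sq]
    have := Matrix.posSemidef_conjTranspose_mul_self S
    simpa [Matrix.conjTranspose_eq_transpose_of_trivial, hSsymmT] using this
  have hDD : (Dᵀ * D).PosSemidef := by
    have := Matrix.posSemidef_conjTranspose_mul_self D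
    simpa [Matrix.conjTranspose_eq_transpose_of_trivial] using this
  have hM : (S ^ 2 + Dᵀ * D + 1).PosDef :=
    Matrix.PosDef.posSemidef_add (hSS.add hDD) Matrix.PosDef.one
  refine ⟨hM, ?_⟩
  set M := S ^ 2 + Dᵀ * D + 1 with hMdef
  set A := B₁ * S + C * D + B₂ with hA
  have hX₀M : X₀ * M = A := by
    rw [hX₀, Matrix.mul_assoc, Matrix.nonsing_inv_mul M
      ((Matrix.isUnit_iff_isUnit_det M).1 hM.isUnit), Matrix.mul_one]
  intro X hX
  set Y := X - X₀ with hY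
  have hY0 : Y ≠ 0 := sub_ne_zero.2 hX
  have e1 : X * S - B₁ = (X₀ * S - B₁) + Y * S := by
    rw [hY, Matrix.sub_mul]; abel
  have e2 : X * Dᵀ - C = (X₀ * Dᵀ - C) + Y * Dᵀ := by
    rw [hY, Matrix.sub_mul]; abel
  have e3 : X - B₂ = (X₀ - B₂) + Y := by rw [hY]; abel
  have hcross : trace ((X₀ * S - B₁) * (Y * S)ᵀ) + trace ((X₀ * Dᵀ - C) * (Y * Dᵀ)ᵀ)
      + trace ((X₀ - B₂) * Yᵀ) = 0 := by
    have hzero : X₀ * S * S + X₀ * Dᵀ * D + X₀ - (B₁ * S + C * D + B₂) = 0 := by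
      have : X₀ * M = X₀ * S * S + X₀ * Dᵀ * D + X₀ := by
        rw [hMdef, Matrix.mul_add, Matrix.mul_add, Matrix.mul_one, sq,
          ← Matrix.mul_assoc, ← Matrix.mul_assoc]
      rw [← this, hX₀M, hA]
      abel
    have key : trace ((X₀ * S - B₁) * (Y * S)ᵀ) + trace ((X₀ * Dᵀ - C) * (Y * Dᵀ)ᵀ)
        + trace ((X₀ - B₂) * Yᵀ)
        = trace ((X₀ * S * S + X₀ * Dᵀ * D + X₀ - (B₁ * S + C * D + B₂)) * Yᵀ) := by
      have hSsymm : Sᵀ = S := hSsymmT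
      simp only [Matrix.transpose_mul, Matrix.transpose_transpose, hSsymm,
        Matrix.sub_mul, Matrix.add_mul, Matrix.trace_sub, Matrix.trace_add,
        ← Matrix.mul_assoc]
      ring
    rw [key, hzero, Matrix.zero_mul, Matrix.trace_zero]
  have hfX : f X = f X₀ + (1/2) * frobSq (Y * S) + (1/2) * frobSq (Y * Dᵀ)
      + (1/2) * frobSq Y := by
    rw [hf X, hf X₀, e1, e2, e3, frobSq_add, frobSq_add, frobSq_add]
    linarith [hcross]
  have hq : 0 < (1/2) * frobSq (Y * S) + (1/2) * frobSq (Y * Dᵀ) + (1/2) * frobSq Y := by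
    have := frobSq_pos hY0
    have := frobSq_nonneg (Y * S)
    have := frobSq_nonneg (Y * Dᵀ)
    linarith
  linarith [hfX, hq]
end

section
/- Let L, N be positive integers and Ω₁ = {X ∈ ℝ^{L×N} : X has nonnegative entries and each column of X sums to 1}. Let (X^k), (E^k) be sequences in ℝ^{L×N} and (W^k) a sequence in Ω₁ such that for every k: ⟨(X^{k+1} + E^k) − W^{k+1}, W − W^{k+1}⟩_F ≤ 0 for all W ∈ Ω₁ (i.e., W^{k+1} is the metric projection of X^{k+1} + E^k onto Ω₁), E^{k+1} = E^k + X^{k+1} − W^{k+1}, and E^{k+1} − E^k → 0 as k → ∞. If along some subsequence X^{k_i} → X* and E^{k_i} → E*, then X* ∈ Ω₁ and ⟨E*, W − X*⟩_F ≤ 0 for all W ∈ Ω₁. -/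
open Matrix Filter

/-- Frobenius inner product of real matrices: `⟨Z₁, Z₂⟩_F = Σ_{i,j} (Z₁)_{ij}(Z₂)_{ij}`. -/
noncomputable def frobInner {m n : ℕ} (Z₁ Z₂ : Matrix (Fin m) (Fin n) ℝ) : ℝ :=
  ∑ i, ∑ j, Z₁ i j * Z₂ i j

lemma matrix_entry_tendsto {m n : ℕ} {f : ℕ → Matrix (Fin m) (Fin n) ℝ}
    {A : Matrix (Fin m) (Fin n) ℝ} (hf : Tendsto f atTop (nhds A)) (i : Fin m) (j : Fin n) :
    Tendsto (fun k => f k i j) atTop (nhds (A i j)) := by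
  have h1 := tendsto_pi_nhds.mp hf i
  exact tendsto_pi_nhds.mp h1 j

lemma frob_tendsto {m n : ℕ} {f g : ℕ → Matrix (Fin m) (Fin n) ℝ}
    {A B : Matrix (Fin m) (Fin n) ℝ}
    (hf : Tendsto f atTop (nhds A)) (hg : Tendsto g atTop (nhds B)) :
    Tendsto (fun k => frobInner (f k) (g k)) atTop (nhds (frobInner A B)) := by
  unfold frobInner
  apply tendsto_finset_sum
  intro i _
  apply tendsto_finset_sum
  intro j _
  exact (matrix_entry_tendsto hf i j).mul (matrix_entry_tendsto hg i j)

/-- Limiting variational inequality for the W-subproblem: if each `W^{k+1}` is the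
metric projection of `X^{k+1} + E^k` onto `Ω₁`, `E^{k+1} = E^k + X^{k+1} − W^{k+1}`,
`E^{k+1} − E^k → 0`, and along a subsequence `X^{k_i} → X*` and `E^{k_i} → E*`,
then `X* ∈ Ω₁` and `⟨E*, W − X*⟩_F ≤ 0` for all `W ∈ Ω₁`. -/
theorem stmt_12 (L N : ℕ) (hL : 0 < L) (hN : 0 < N)
    (Ω₁ : Set (Matrix (Fin L) (Fin N) ℝ))
    (hΩ₁ : Ω₁ = {X : Matrix (Fin L) (Fin N) ℝ |
      (∀ i j, 0 ≤ X i j) ∧ ∀ j, ∑ i, X i j = 1})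
    (X E W : ℕ → Matrix (Fin L) (Fin N) ℝ)
    (hWmem : ∀ k, W k ∈ Ω₁)
    (hproj : ∀ k, ∀ W' ∈ Ω₁,
      frobInner (X (k + 1) + E k - W (k + 1)) (W' - W (k + 1)) ≤ 0)
    (hE : ∀ k, E (k + 1) = E k + X (k + 1) - W (k + 1))
    (hEdiff : Tendsto (fun k => E (k + 1) - E k) atTop (nhds 0))
    (φ : ℕ → ℕ) (hφ : StrictMono φ)
    (Xstar Estar : Matrix (Fin L) (Fin N) ℝ)
    (hXc : Tendsto (fun i => X (φ i)) atTop (nhds Xstar))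
    (hEc : Tendsto (fun i => E (φ i)) atTop (nhds Estar)) :
    Xstar ∈ Ω₁ ∧ ∀ W' ∈ Ω₁, frobInner Estar (W' - Xstar) ≤ 0 := by
  have hφge : ∀ i, i ≤ φ i := fun i => hφ.le_apply
  have hgtop : Tendsto (fun i => φ i - 1) atTop atTop :=
    (tendsto_sub_atTop_nat 1).comp hφ.tendsto_atTop
  -- X (φ i) - W (φ i) → 0
  have hdiff : Tendsto (fun i => X (φ i) - W (φ i)) atTop (nhds 0) := by
    have hcomp : Tendsto (fun i => E ((φ i - 1) + 1) - E (φ i - 1)) atTop (nhds 0) :=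
      hEdiff.comp hgtop
    refine hcomp.congr' ?_
    filter_upwards [eventually_ge_atTop 1] with i hi
    have h1 : 1 ≤ φ i := le_trans hi (hφge i)
    have heq : φ i - 1 + 1 = φ i := Nat.sub_add_cancel h1
    have hEk := hE (φ i - 1)
    rw [heq] at hEk
    rw [heq, hEk]
    abel
  have hWc : Tendsto (fun i => W (φ i)) atTop (nhds Xstar) := by
    have h := hXc.sub hdiff
    simpa using h
  constructor
  · rw [hΩ₁]
    refine ⟨fun i j => ?_, fun j => ?_⟩
    · refine ge_of_tendsto' (matrix_entry_tendsto hWc i j) fun k => ?_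
      have := hWmem (φ k)
      rw [hΩ₁] at this
      exact this.1 i j
    · have hsum : Tendsto (fun k => ∑ i, W (φ k) i j) atTop (nhds (∑ i, Xstar i j)) :=
        tendsto_finset_sum _ fun i _ => matrix_entry_tendsto hWc i j
      have hsum' : Tendsto (fun _ : ℕ => (1 : ℝ)) atTop (nhds (∑ i, Xstar i j)) := by
        refine hsum.congr fun k => ?_
        have := hWmem (φ k)
        rw [hΩ₁] at this
        exact this.2 j
      exact tendsto_nhds_unique hsum' tendsto_const_nhds
  · intro W' hW'
    have hlim : Tendsto (fun i => frobInner (E (φ i)) (W' - W (φ i))) atTop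
        (nhds (frobInner Estar (W' - Xstar))) :=
      frob_tendsto hEc (tendsto_const_nhds.sub hWc)
    refine le_of_tendsto hlim ?_
    filter_upwards [eventually_ge_atTop 1] with i hi
    have h1 : 1 ≤ φ i := le_trans hi (hφge i)
    have heq : φ i - 1 + 1 = φ i := Nat.sub_add_cancel h1
    have hp := hproj (φ i - 1) W' hW'
    rw [heq] at hp
    have hEk := hE (φ i - 1)
    rw [heq] at hEk
    have hEE : X (φ i) + E (φ i - 1) - W (φ i) = E (φ i) := by
      rw [hEk]; abel
    rw [hEE] at hp
    exact hp
end

section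
/- Let N be a positive integer and Ω₂ = {t ∈ ℝ^N : t ≥ 0}. Let (s^k), (g^k), (t^k) be sequences in ℝ^N with, for every k: t^{k+1} = (s^{k+1} + g^k)⁺ (componentwise positive part), g^{k+1} = g^k + s^{k+1} − t^{k+1}, and g^{k+1} − g^k → 0 as k → ∞. If along some subsequence s^{k_i} → s* and g^{k_i} → g*, then s* ∈ Ω₂ and ⟨g*, t − s*⟩ ≤ 0 for all t ∈ Ω₂. -/
open Filter

/-- Limiting variational inequality for the t-subproblem: if
`t^{k+1} = (s^{k+1} + g^k)⁺` (componentwise positive part),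
`g^{k+1} = g^k + s^{k+1} − t^{k+1}`, `g^{k+1} − g^k → 0`, and along a subsequence
`s^{k_i} → s*` and `g^{k_i} → g*`, then `s* ∈ Ω₂` and `⟨g*, t − s*⟩ ≤ 0` for all
`t ∈ Ω₂`. -/
theorem stmt_13 (N : ℕ) (hN : 0 < N)
    (Ω₂ : Set (Fin N → ℝ)) (hΩ₂ : Ω₂ = {t : Fin N → ℝ | ∀ i, 0 ≤ t i})
    (s g t : ℕ → Fin N → ℝ)
    (ht : ∀ k i, t (k + 1) i = max (s (k + 1) i + g k i) 0)
    (hg : ∀ k, g (k + 1) = g k + s (k + 1) - t (k + 1))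
    (hgdiff : Tendsto (fun k => g (k + 1) - g k) atTop (nhds 0))
    (φ : ℕ → ℕ) (hφ : StrictMono φ)
    (sstar gstar : Fin N → ℝ)
    (hsc : Tendsto (fun i => s (φ i)) atTop (nhds sstar))
    (hgc : Tendsto (fun i => g (φ i)) atTop (nhds gstar)) :
    sstar ∈ Ω₂ ∧ ∀ t' ∈ Ω₂, ∑ i, gstar i * (t' i - sstar i) ≤ 0 := by
  subst hΩ₂
  have hφt : Tendsto φ atTop atTop := hφ.tendsto_atTop
  have hφ1 : ∀ᶠ j in atTop, 1 ≤ φ j := hφt.eventually_ge_atTop 1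
  have hpred : ∀ᶠ j in atTop, (φ j - 1) + 1 = φ j :=
    hφ1.mono fun j hj => Nat.succ_pred_eq_of_pos hj
  have hφm : Tendsto (fun j => φ j - 1) atTop atTop :=
    (tendsto_sub_atTop_nat 1).comp hφt
  -- s(k+1) - t(k+1) → 0
  have hst : Tendsto (fun k => s (k + 1) - t (k + 1)) atTop (nhds (0 : Fin N → ℝ)) := by
    refine hgdiff.congr fun k => ?_
    rw [hg k]; abel
  -- g (φ j - 1) → gstar
  have hgdφ : Tendsto (fun j => g (φ j) - g (φ j - 1)) atTop (nhds 0) := by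
    refine ((hgdiff.comp hφm).congr' ?_)
    filter_upwards [hpred] with j hj
    simp only [Function.comp, hj]
  have hgprev : Tendsto (fun j => g (φ j - 1)) atTop (nhds gstar) := by
    have := hgc.sub hgdφ
    simpa using this.congr fun j => by abel
  -- t (φ j) → sstar
  have hstφ : Tendsto (fun j => s (φ j) - t (φ j)) atTop (nhds 0) := by
    refine ((hst.comp hφm).congr' ?_)
    filter_upwards [hpred] with j hj
    simp only [Function.comp, hj]
  have htφ : Tendsto (fun j => t (φ j)) atTop (nhds sstar) := by
    have := hsc.sub hstφ
    simpa using this.congr fun j => by abel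
  -- key identity
  have key : ∀ i, sstar i = max (sstar i + gstar i) 0 := by
    intro i
    have h1 : Tendsto (fun j => t (φ j) i) atTop (nhds (sstar i)) :=
      tendsto_pi_nhds.1 htφ i
    have h2 : Tendsto (fun j => max (s (φ j) i + g (φ j - 1) i) 0) atTop
        (nhds (max (sstar i + gstar i) 0)) :=
      ((tendsto_pi_nhds.1 hsc i).add (tendsto_pi_nhds.1 hgprev i)).max tendsto_const_nhds
    have heq : ∀ᶠ j in atTop, t (φ j) i = max (s (φ j) i + g (φ j - 1) i) 0 := by
      filter_upwards [hpred] with j hj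
      conv_lhs => rw [← hj]
      rw [ht (φ j - 1) i, hj]
    exact tendsto_nhds_unique (h1.congr' heq) h2
  constructor
  · intro i
    rw [key i]; exact le_max_right _ _
  · intro t' ht'
    refine Finset.sum_nonpos fun i _ => ?_
    rcases le_or_gt (sstar i + gstar i) 0 with h | h
    · have hs0 : sstar i = 0 := by rw [key i, max_eq_right h]
      have hg0 : gstar i ≤ 0 := by linarith
      rw [hs0, sub_zero]
      exact mul_nonpos_of_nonpos_of_nonneg hg0 (ht' i)
    · have hk := key i
      rw [max_eq_left h.le] at hk
      have hg0 : gstar i = 0 := by linarith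
      simp [hg0]
end
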